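/- Let K ≫ 1 be a dyadic number. Let {S₁} be a family of horizontal 1×K^{-1}-rectangles partitioning [-1,1]² and {S₂} a family of vertical K^{-1}×1-rectangles partitioning [-1,1]². Then for every ε > 0 there is a constant C_ε (independent of K, f, and x) such that for all f : [-1,1]² → ℂ and all x ∈ ℝ³, |Ef(x)| ≤ C_ε ( K^{5ε} max_{τ ∈ 𝒞_K} |Ef_τ(x)| + K^{2ε} max_{j, S_j} |Ef_{S_j}(x)| + K³ · Br_{K^ε} Ef(x) ). -/

import Mathlib

open MeasureTheory Metric Set
open scoped ENNReal NNReal Real RealInnerProductSpace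

noncomputable section

abbrev E3 : Type := EuclideanSpace ℝ (Fin 3)

def UnitSq : Set (ℝ × ℝ) := Icc (-1) 1 ×ˢ Icc (-1) 1

/-- The extension operator of the hyperbolic paraboloid:
`Ef(x) = ∫_{[-1,1]²} e^{i(x₁ξ₁ + x₂ξ₂ + x₃ξ₁ξ₂)} f(ξ₁,ξ₂) dξ₁dξ₂`. -/
def ExtH (f : ℝ × ℝ → ℂ) (x : E3) : ℂ :=
  ∫ ξ in UnitSq,
    Complex.exp (Complex.I * ((x 0 * ξ.1 + x 1 * ξ.2 + x 2 * (ξ.1 * ξ.2) : ℝ) : ℂ)) * f ξ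

/-- The `ij`-th square of side `1/N` in the grid partition of `[-1,1]²`
(the collection `𝒞_K` of `1/K`-squares, `N = K`). -/
def cSq (N : ℕ) (ij : ℕ × ℕ) : Set (ℝ × ℝ) :=
  Icc (-1 + ij.1 / (N:ℝ)) (-1 + (ij.1 + 1) / (N:ℝ)) ×ˢ
  Icc (-1 + ij.2 / (N:ℝ)) (-1 + (ij.2 + 1) / (N:ℝ))

/-- An `A`-broad collection `𝒯 ⊆ 𝒞_K` (`K = N`): `#𝒯 ≥ A` and, for each `j = 1,2`,
the `j`-th coordinates of the centers of the squares of `𝒯` are pairwise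
`2/N`-separated (i.e. the indices are `2`-separated). -/
def IsBroadFam (N : ℕ) (A : ℝ) (𝒯 : Finset (ℕ × ℕ)) : Prop :=
  𝒯 ⊆ Finset.range (2 * N) ×ˢ Finset.range (2 * N) ∧ A ≤ (𝒯.card : ℝ) ∧
  ∀ t ∈ 𝒯, ∀ t' ∈ 𝒯, t ≠ t' →
    2 ≤ |(t.1 : ℝ) - (t'.1 : ℝ)| ∧ 2 ≤ |(t.2 : ℝ) - (t'.2 : ℝ)|

/-- The broad function `Br_A Ef(x) = max_{𝒯 A-broad} min_{τ ∈ 𝒯} |Ef_τ(x)|`,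
where `f_τ = f·𝟙_τ`. -/
def BrExt (N : ℕ) (A : ℝ) (f : ℝ × ℝ → ℂ) (x : E3) : ℝ≥0∞ :=
  ⨆ (𝒯 : Finset (ℕ × ℕ)) (_ : IsBroadFam N A 𝒯),
    ⨅ t ∈ 𝒯, (‖ExtH ((cSq N t).indicator f) x‖₊ : ℝ≥0∞)

/-- The `j`-th horizontal `1 × K^{-1}`-rectangle (row) of `[-1,1]²`, `K = N`. -/
def rowRect (N : ℕ) (j : ℕ) : Set (ℝ × ℝ) :=
  Icc (-1 : ℝ) 1 ×ˢ Icc (-1 + j / (N:ℝ)) (-1 + (j + 1) / (N:ℝ))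

/-- The `j`-th vertical `K^{-1} × 1`-rectangle (column) of `[-1,1]²`, `K = N`. -/
def colRect (N : ℕ) (j : ℕ) : Set (ℝ × ℝ) :=
  Icc (-1 + j / (N:ℝ)) (-1 + (j + 1) / (N:ℝ)) ×ˢ Icc (-1 : ℝ) 1


section AUX


lemma prod_ae_right (s : Set ℝ) (c d : ℝ) :
    (s ×ˢ Set.Ioc c d : Set (ℝ × ℝ)) =ᵐ[volume] (s ×ˢ Set.Icc c d) := by
  rw [MeasureTheory.ae_eq_set]
  constructor
  · refine measure_mono_null (fun z hz => ?_) (measure_empty)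
    exact absurd hz.1.2 (fun h => hz.2 ⟨hz.1.1, Set.Ioc_subset_Icc_self h⟩)
  · refine measure_mono_null (t := (Set.univ ×ˢ {c} : Set (ℝ × ℝ))) ?_ ?_
    · rintro ⟨x, y⟩ ⟨⟨hx, hy⟩, hn⟩
      refine ⟨trivial, ?_⟩
      by_contra hyc
      exact hn ⟨hx, lt_of_le_of_ne hy.1 (Ne.symm hyc), hy.2⟩
    · rw [Measure.volume_eq_prod, Measure.prod_prod, Real.volume_singleton, mul_zero]

lemma prod_ae_left (s : Set ℝ) (c d : ℝ) :
    (Set.Ioc c d ×ˢ s : Set (ℝ × ℝ)) =ᵐ[volume] (Set.Icc c d ×ˢ s) := by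
  rw [MeasureTheory.ae_eq_set]
  constructor
  · refine measure_mono_null (fun z hz => ?_) (measure_empty)
    exact absurd hz.1.1 (fun h => hz.2 ⟨Set.Ioc_subset_Icc_self h, hz.1.2⟩)
  · refine measure_mono_null (t := (({c} : Set ℝ) ×ˢ Set.univ : Set (ℝ × ℝ))) ?_ ?_
    · rintro ⟨x, y⟩ ⟨⟨hx, hy⟩, hn⟩
      refine ⟨?_, trivial⟩
      by_contra hyc
      exact hn ⟨⟨lt_of_le_of_ne hx.1 (Ne.symm hyc), hx.2⟩, hy⟩
    · rw [Measure.volume_eq_prod, Measure.prod_prod, Real.volume_singleton, zero_mul]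

lemma biUnion_Ioc_parts (a : ℕ → ℝ) (ha : Monotone a) (n : ℕ) :
    ⋃ k ∈ Finset.range n, Set.Ioc (a k) (a (k + 1)) = Set.Ioc (a 0) (a n) := by
  induction n with
  | zero => simp
  | succ n ih =>
    rw [Finset.range_add_one]
    simp only [Finset.mem_insert, Set.iUnion_iUnion_eq_or_left]
    rw [ih, Set.union_comm, Set.Ioc_union_Ioc_eq_Ioc (ha (Nat.zero_le n)) (ha (Nat.le_succ n))]

lemma split_snd (g : ℝ × ℝ → ℂ) (p q : ℝ) (a : ℕ → ℝ) (ha : Monotone a) (n : ℕ)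
    (hg : IntegrableOn g (Set.Icc p q ×ˢ Set.Icc (a 0) (a n)) volume) :
    ∫ z in Set.Icc p q ×ˢ Set.Icc (a 0) (a n), g z =
      ∑ k ∈ Finset.range n, ∫ z in Set.Icc p q ×ˢ Set.Icc (a k) (a (k + 1)), g z := by
  have key : ∀ k, k ∈ Finset.range n →
      (Set.Icc p q ×ˢ Set.Ioc (a k) (a (k+1)) : Set (ℝ×ℝ)) ⊆
        Set.Icc p q ×ˢ Set.Icc (a 0) (a n) := by
    intro k hk
    refine Set.prod_mono_right (subset_trans Set.Ioc_subset_Icc_self (Set.Icc_subset_Icc ?_ ?_))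
    · exact ha (Nat.zero_le k)
    · exact ha (Finset.mem_range.1 hk)
  have hU : (⋃ k ∈ Finset.range n, (Set.Icc p q ×ˢ Set.Ioc (a k) (a (k+1)) : Set (ℝ×ℝ)))
      = Set.Icc p q ×ˢ Set.Ioc (a 0) (a n) := by
    rw [← biUnion_Ioc_parts a ha n, Set.prod_iUnion₂]
  calc ∫ z in Set.Icc p q ×ˢ Set.Icc (a 0) (a n), g z
      = ∫ z in Set.Icc p q ×ˢ Set.Ioc (a 0) (a n), g z :=
        (setIntegral_congr_set (prod_ae_right _ _ _)).symm
    _ = ∑ k ∈ Finset.range n, ∫ z in Set.Icc p q ×ˢ Set.Ioc (a k) (a (k+1)), g z := by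
        rw [← hU]
        refine integral_biUnion_finset _ (fun k _ => (measurableSet_Icc.prod measurableSet_Ioc))
          ?_ (fun k hk => hg.mono_set (key k hk))
        intro k hk l hl hkl
        simp only [Function.onFun, Set.disjoint_prod]
        right
        refine Set.Ioc_disjoint_Ioc.2 ?_
        rcases lt_or_gt_of_ne hkl with h | h
        · exact le_trans (min_le_left _ _) (le_trans (ha h) (le_max_right _ _))
        · exact le_trans (min_le_right _ _) (le_trans (ha h) (le_max_left _ _))
    _ = ∑ k ∈ Finset.range n, ∫ z in Set.Icc p q ×ˢ Set.Icc (a k) (a (k+1)), g z :=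
        Finset.sum_congr rfl (fun k _ => setIntegral_congr_set (prod_ae_right _ _ _))

lemma split_fst (g : ℝ × ℝ → ℂ) (p q : ℝ) (a : ℕ → ℝ) (ha : Monotone a) (n : ℕ)
    (hg : IntegrableOn g (Set.Icc (a 0) (a n) ×ˢ Set.Icc p q) volume) :
    ∫ z in Set.Icc (a 0) (a n) ×ˢ Set.Icc p q, g z =
      ∑ k ∈ Finset.range n, ∫ z in Set.Icc (a k) (a (k + 1)) ×ˢ Set.Icc p q, g z := by
  have key : ∀ k, k ∈ Finset.range n →
      (Set.Ioc (a k) (a (k+1)) ×ˢ Set.Icc p q : Set (ℝ×ℝ)) ⊆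
        Set.Icc (a 0) (a n) ×ˢ Set.Icc p q := by
    intro k hk
    refine Set.prod_mono_left (subset_trans Set.Ioc_subset_Icc_self (Set.Icc_subset_Icc ?_ ?_))
    · exact ha (Nat.zero_le k)
    · exact ha (Finset.mem_range.1 hk)
  have hU : (⋃ k ∈ Finset.range n, (Set.Ioc (a k) (a (k+1)) ×ˢ Set.Icc p q : Set (ℝ×ℝ)))
      = Set.Ioc (a 0) (a n) ×ˢ Set.Icc p q := by
    rw [← biUnion_Ioc_parts a ha n, Set.iUnion₂_prod_const]
  calc ∫ z in Set.Icc (a 0) (a n) ×ˢ Set.Icc p q, g z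
      = ∫ z in Set.Ioc (a 0) (a n) ×ˢ Set.Icc p q, g z :=
        (setIntegral_congr_set (prod_ae_left _ _ _)).symm
    _ = ∑ k ∈ Finset.range n, ∫ z in Set.Ioc (a k) (a (k+1)) ×ˢ Set.Icc p q, g z := by
        rw [← hU]
        refine integral_biUnion_finset _ (fun k _ => (measurableSet_Ioc.prod measurableSet_Icc))
          ?_ (fun k hk => hg.mono_set (key k hk))
        intro k hk l hl hkl
        simp only [Function.onFun, Set.disjoint_prod]
        left
        refine Set.Ioc_disjoint_Ioc.2 ?_
        rcases lt_or_gt_of_ne hkl with h | h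
        · exact le_trans (min_le_left _ _) (le_trans (ha h) (le_max_right _ _))
        · exact le_trans (min_le_right _ _) (le_trans (ha h) (le_max_left _ _))
    _ = ∑ k ∈ Finset.range n, ∫ z in Set.Icc (a k) (a (k+1)) ×ˢ Set.Icc p q, g z :=
        Finset.sum_congr rfl (fun k _ => setIntegral_congr_set (prod_ae_left _ _ _))

end AUX

section SPEC
variable (N : ℕ) (f : ℝ × ℝ → ℂ) (x : E3)

def gfun (f : ℝ × ℝ → ℂ) (x : E3) (ξ : ℝ × ℝ) : ℂ :=
  Complex.exp (Complex.I * ((x 0 * ξ.1 + x 1 * ξ.2 + x 2 * (ξ.1 * ξ.2) : ℝ) : ℂ)) * f ξ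

lemma extH_eq : ExtH f x = ∫ ξ in UnitSq, gfun f x ξ := rfl

def aN (N : ℕ) (i : ℕ) : ℝ := -1 + (i : ℝ) / N

lemma aN_mono : Monotone (aN N) := by
  intro i j hij
  unfold aN
  have : (i:ℝ) ≤ (j:ℝ) := by exact_mod_cast hij
  gcongr <;> positivity

lemma aN_zero : aN N 0 = -1 := by simp [aN]

lemma aN_last (hN : 1 ≤ N) : aN N (2 * N) = 1 := by
  have : (N : ℝ) ≠ 0 := by positivity
  simp only [aN]
  push_cast
  field_simp
  ring

lemma aN_succ (j : ℕ) : aN N (j + 1) = -1 + ((j : ℝ) + 1) / N := by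
  unfold aN; push_cast; ring

lemma cSq_eq (ij : ℕ × ℕ) :
    cSq N ij = Icc (aN N ij.1) (aN N (ij.1 + 1)) ×ˢ Icc (aN N ij.2) (aN N (ij.2 + 1)) := by
  rw [cSq, aN_succ, aN_succ]; rfl

lemma rowRect_eq (j : ℕ) :
    rowRect N j = Icc (-1 : ℝ) 1 ×ˢ Icc (aN N j) (aN N (j + 1)) := by
  rw [rowRect, aN_succ]; rfl

lemma colRect_eq (j : ℕ) :
    colRect N j = Icc (aN N j) (aN N (j + 1)) ×ˢ Icc (-1 : ℝ) 1 := by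
  rw [colRect, aN_succ]; rfl

lemma aN_mem (hN : 1 ≤ N) {i : ℕ} (hi : i ≤ 2 * N) : aN N i ∈ Icc (-1 : ℝ) 1 := by
  constructor
  · rw [← aN_zero N]; exact aN_mono N (Nat.zero_le i)
  · rw [← aN_last N hN]; exact aN_mono N hi

lemma Icc_aN_subset (hN : 1 ≤ N) {i : ℕ} (hi : i < 2 * N) :
    Icc (aN N i) (aN N (i + 1)) ⊆ Icc (-1 : ℝ) 1 :=
  Icc_subset_Icc (aN_mem N hN hi.le).1 (aN_mem N hN hi).2

lemma cSq_subset (hN : 1 ≤ N) {ij : ℕ × ℕ} (h1 : ij.1 < 2 * N) (h2 : ij.2 < 2 * N) :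
    cSq N ij ⊆ UnitSq := by
  rw [cSq_eq, UnitSq]
  exact Set.prod_mono (Icc_aN_subset N hN h1) (Icc_aN_subset N hN h2)

lemma rowRect_subset (hN : 1 ≤ N) {j : ℕ} (hj : j < 2 * N) : rowRect N j ⊆ UnitSq := by
  rw [rowRect_eq, UnitSq]
  exact Set.prod_mono subset_rfl (Icc_aN_subset N hN hj)

lemma colRect_subset (hN : 1 ≤ N) {j : ℕ} (hj : j < 2 * N) : colRect N j ⊆ UnitSq := by
  rw [colRect_eq, UnitSq]
  exact Set.prod_mono (Icc_aN_subset N hN hj) subset_rfl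

lemma extH_indicator {A : Set (ℝ × ℝ)} (hA : MeasurableSet A) (hAU : A ⊆ UnitSq) :
    ExtH (A.indicator f) x = ∫ ξ in A, gfun f x ξ := by
  rw [ExtH]
  have : ∀ ξ : ℝ × ℝ,
      Complex.exp (Complex.I * ((x 0 * ξ.1 + x 1 * ξ.2 + x 2 * (ξ.1 * ξ.2) : ℝ) : ℂ)) *
        (A.indicator f) ξ = A.indicator (gfun f x) ξ := by
    intro ξ
    by_cases hξ : ξ ∈ A
    · simp [Set.indicator_of_mem hξ, gfun]
    · simp [Set.indicator_of_notMem hξ]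
  simp_rw [this]
  rw [setIntegral_indicator hA, Set.inter_eq_self_of_subset_right hAU]

variable {f x}

lemma T_eq_rows (hN : 1 ≤ N) (hg : IntegrableOn (gfun f x) UnitSq volume) :
    ∫ ξ in UnitSq, gfun f x ξ =
      ∑ j ∈ Finset.range (2 * N), ∫ ξ in rowRect N j, gfun f x ξ := by
  have h0 : UnitSq = Icc (-1 : ℝ) 1 ×ˢ Icc (aN N 0) (aN N (2 * N)) := by
    rw [aN_zero, aN_last N hN]; rfl
  rw [h0]
  rw [split_snd (gfun f x) (-1) 1 (aN N) (aN_mono N) (2 * N) (by rw [← h0]; exact hg)]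
  exact Finset.sum_congr rfl (fun j _ => by rw [rowRect_eq])

lemma row_eq_sq (hN : 1 ≤ N) (hg : IntegrableOn (gfun f x) UnitSq volume)
    {j : ℕ} (hj : j < 2 * N) :
    ∫ ξ in rowRect N j, gfun f x ξ =
      ∑ i ∈ Finset.range (2 * N), ∫ ξ in cSq N (i, j), gfun f x ξ := by
  have h0 : rowRect N j = Icc (aN N 0) (aN N (2 * N)) ×ˢ Icc (aN N j) (aN N (j + 1)) := by
    rw [rowRect_eq, aN_zero, aN_last N hN]
  rw [h0, split_fst (gfun f x) (aN N j) (aN N (j + 1)) (aN N) (aN_mono N) (2 * N)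
    (by rw [← h0]; exact hg.mono_set (rowRect_subset N hN hj))]
  exact Finset.sum_congr rfl (fun i _ => by rw [cSq_eq])

lemma col_eq_sq (hN : 1 ≤ N) (hg : IntegrableOn (gfun f x) UnitSq volume)
    {i : ℕ} (hi : i < 2 * N) :
    ∫ ξ in colRect N i, gfun f x ξ =
      ∑ j ∈ Finset.range (2 * N), ∫ ξ in cSq N (i, j), gfun f x ξ := by
  have h0 : colRect N i = Icc (aN N i) (aN N (i + 1)) ×ˢ Icc (aN N 0) (aN N (2 * N)) := by
    rw [colRect_eq, aN_zero, aN_last N hN]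
  rw [h0, split_snd (gfun f x) (aN N i) (aN N (i + 1)) (aN N) (aN_mono N) (2 * N)
    (by rw [← h0]; exact hg.mono_set (colRect_subset N hN hi))]
  exact Finset.sum_congr rfl (fun j _ => by rw [cSq_eq])

lemma T_eq_squares (hN : 1 ≤ N) (hg : IntegrableOn (gfun f x) UnitSq volume) :
    ∫ ξ in UnitSq, gfun f x ξ =
      ∑ ij ∈ Finset.range (2 * N) ×ˢ Finset.range (2 * N),
        ∫ ξ in cSq N ij, gfun f x ξ := by
  rw [T_eq_rows N hN hg, Finset.sum_product]
  rw [Finset.sum_comm]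
  exact Finset.sum_congr rfl (fun j hj => row_eq_sq N hN hg (Finset.mem_range.1 hj))

end SPEC

section COMB

lemma nat_close {p q : ℕ} (h : ¬ (2 ≤ |(p:ℝ) - (q:ℝ)|)) :
    p ∈ ({q - 1, q, q + 1} : Finset ℕ) := by
  rw [not_le, abs_lt] at h
  obtain ⟨h1, h2⟩ := h
  have hi1 : (p:ℤ) - q < 2 := by exact_mod_cast (by push_cast; linarith : ((p:ℤ):ℝ) - ((q:ℤ):ℝ) < 2)
  have hi2 : (-2 : ℤ) < (p:ℤ) - q := by
    exact_mod_cast (by push_cast; linarith : (-2:ℝ) < ((p:ℤ):ℝ) - ((q:ℤ):ℝ))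
  simp only [Finset.mem_insert, Finset.mem_singleton]
  omega

def SepFam (𝒯 : Finset (ℕ × ℕ)) : Prop :=
  ∀ t ∈ 𝒯, ∀ t' ∈ 𝒯, t ≠ t' →
    2 ≤ |(t.1 : ℝ) - (t'.1 : ℝ)| ∧ 2 ≤ |(t.2 : ℝ) - (t'.2 : ℝ)|

lemma exists_maximal_sep (S : Finset (ℕ × ℕ)) :
    ∃ 𝒯 : Finset (ℕ × ℕ), 𝒯 ⊆ S ∧ SepFam 𝒯 ∧
      ∀ τ ∈ S, ∃ t ∈ 𝒯,
        ¬ (2 ≤ |(τ.1 : ℝ) - (t.1 : ℝ)|) ∨ ¬ (2 ≤ |(τ.2 : ℝ) - (t.2 : ℝ)|) := by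
  classical
  set P := S.powerset.filter SepFam with hP
  have hPne : P.Nonempty := ⟨∅, by
    simp only [hP, Finset.mem_filter, Finset.mem_powerset]
    exact ⟨Finset.empty_subset S, fun t ht => absurd ht (Finset.notMem_empty t)⟩⟩
  obtain ⟨𝒯, h𝒯P, hmax⟩ := Finset.exists_max_image P Finset.card hPne
  rw [hP, Finset.mem_filter, Finset.mem_powerset] at h𝒯P
  obtain ⟨h𝒯S, h𝒯sep⟩ := h𝒯P
  refine ⟨𝒯, h𝒯S, h𝒯sep, ?_⟩
  intro τ hτ
  by_cases hτ𝒯 : τ ∈ 𝒯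
  · exact ⟨τ, hτ𝒯, Or.inl (by simp)⟩
  · have hnotsep : ¬ SepFam (insert τ 𝒯) := by
      intro hsep
      have hmem : insert τ 𝒯 ∈ P := by
        rw [hP, Finset.mem_filter, Finset.mem_powerset]
        exact ⟨Finset.insert_subset hτ h𝒯S, hsep⟩
      have := hmax _ hmem
      rw [Finset.card_insert_of_notMem hτ𝒯] at this
      omega
    rw [SepFam] at hnotsep
    push_neg at hnotsep
    obtain ⟨t, ht, t', ht', hne, hfail⟩ := hnotsep
    rw [Finset.mem_insert] at ht ht'
    rcases ht with rfl | ht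
    · rcases ht' with rfl | ht'
      · exact absurd rfl hne
      · refine ⟨t', ht', ?_⟩
        by_cases h1 : 2 ≤ |(t.1 : ℝ) - (t'.1 : ℝ)|
        · exact Or.inr (not_le.2 (hfail h1))
        · exact Or.inl h1
    · rcases ht' with rfl | ht''
      · refine ⟨t, ht, ?_⟩
        by_cases h1 : 2 ≤ |(t.1 : ℝ) - (t'.1 : ℝ)|
        · exact Or.inr (by rw [abs_sub_comm]; exact not_le.2 (hfail h1))
        · exact Or.inl (by rw [abs_sub_comm]; exact h1)
      · exact absurd (h𝒯sep t ht t' ht'' hne).2 (not_le.2 (hfail (h𝒯sep t ht t' ht'' hne).1))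

lemma card_triple_biUnion (𝒯 : Finset (ℕ × ℕ)) (g : ℕ × ℕ → ℕ) :
    (𝒯.biUnion (fun t => ({g t - 1, g t, g t + 1} : Finset ℕ))).card ≤ 3 * 𝒯.card := by
  classical
  refine le_trans (Finset.card_biUnion_le) ?_
  refine le_trans (Finset.sum_le_card_nsmul _ _ 3 ?_) (by simp [mul_comm])
  intro t _
  refine le_trans (Finset.card_insert_le _ _) ?_
  refine Nat.succ_le_succ (le_trans (Finset.card_insert_le _ _) (by simp))

end COMB

section ARITH

lemma arith_narrow (Tn A Nr thr Mr Mc Msq : ℝ)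
    (hAN : A ≤ Nr) (hN2 : 2 ≤ Nr) (hthr : 0 ≤ thr)
    (heq : 16 * Nr^3 * thr = Tn)
    (htotal : Tn ≤ 4 * Nr^2 * thr +
      (3 * A * (Mr + 2 * Nr * thr) + 3 * A * (Mc + (3 * A * Msq + 2 * Nr * thr)))) :
    Tn ≤ 6 * A * Mr + 6 * A * Mc + 18 * (A * A) * Msq := by
  have hNr0 : (0:ℝ) ≤ Nr := by linarith
  have k1 : A * (Nr * thr) ≤ Nr * (Nr * thr) :=
    mul_le_mul_of_nonneg_right hAN (mul_nonneg hNr0 hthr)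
  have k2 : 0 ≤ 8 * Nr^2 * (Nr - 2) * thr := by
    have : (0:ℝ) ≤ Nr - 2 := by linarith
    positivity
  nlinarith [k1, k2]

lemma arith_final (Tn A P2 P5 Mr Mc Msq : ℝ)
    (hMr : 0 ≤ Mr) (hMc : 0 ≤ Mc) (hMsq : 0 ≤ Msq) (hA0 : 0 ≤ A) (hP2 : 0 ≤ P2)
    (h2eps : A ≤ P2) (h5eps : A * A ≤ P5)
    (hmain : Tn ≤ 6 * A * Mr + 6 * A * Mc + 18 * (A * A) * Msq) :
    Tn ≤ 72 * (P5 * Msq) + 72 * (P2 * max Mr Mc) := by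
  have b1 : A * Mr ≤ P2 * max Mr Mc := mul_le_mul h2eps (le_max_left Mr Mc) hMr hP2
  have b2 : A * Mc ≤ P2 * max Mr Mc := mul_le_mul h2eps (le_max_right Mr Mc) hMc hP2
  have b3 : (A * A) * Msq ≤ P5 * Msq := mul_le_mul_of_nonneg_right h5eps hMsq
  nlinarith [b1, b2, b3]

end ARITH

/-- **The broad–narrow reduction** (Proposition 4.9): let `K = 2^m ≫ 1` be dyadic, let
`{S₁}` (rows) and `{S₂}` (columns) be the partitions of `[-1,1]²` into horizontal
`1 × K^{-1}`- and vertical `K^{-1} × 1`-rectangles. Then for every `ε > 0` there is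
`C_ε` (independent of `K`, `f` and `x`) such that for all `f` and all `x ∈ ℝ³`,
`|Ef(x)| ≤ C_ε (K^{5ε} max_{τ ∈ 𝒞_K} |Ef_τ(x)| + K^{2ε} max_{S_j} |Ef_{S_j}(x)|
+ K³ Br_{K^ε} Ef(x))`. -/
theorem broad_narrow_reduction :
    ∀ ε > (0:ℝ), ∃ Cε > (0:ℝ), ∀ m : ℕ, 1 ≤ m → ∀ f : ℝ × ℝ → ℂ, ∀ x : E3,
      (‖ExtH f x‖₊ : ℝ≥0∞) ≤
        ENNReal.ofReal Cε *
          (ENNReal.ofReal (((2 ^ m : ℕ) : ℝ) ^ (5 * ε)) *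
              (⨆ ij ∈ Finset.range (2 * 2 ^ m) ×ˢ Finset.range (2 * 2 ^ m),
                (‖ExtH ((cSq (2 ^ m) ij).indicator f) x‖₊ : ℝ≥0∞)) +
            ENNReal.ofReal (((2 ^ m : ℕ) : ℝ) ^ (2 * ε)) *
              ((⨆ j ∈ Finset.range (2 * 2 ^ m),
                  (‖ExtH ((rowRect (2 ^ m) j).indicator f) x‖₊ : ℝ≥0∞)) ⊔
               (⨆ j ∈ Finset.range (2 * 2 ^ m),
                  (‖ExtH ((colRect (2 ^ m) j).indicator f) x‖₊ : ℝ≥0∞))) +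
            ENNReal.ofReal (((2 ^ m : ℕ) : ℝ) ^ 3) *
              BrExt (2 ^ m) (((2 ^ m : ℕ) : ℝ) ^ ε) f x) := by
  classical
  intro ε hε
  refine ⟨72, by norm_num, ?_⟩
  intro m hm f x
  set N : ℕ := 2 ^ m with hNdef
  have hN1 : 1 ≤ N := Nat.one_le_two_pow
  have hN2 : 2 ≤ N := by
    calc 2 = 2 ^ 1 := (pow_one 2).symm
    _ ≤ 2 ^ m := Nat.pow_le_pow_right (by norm_num) hm
  have hNR2 : (2:ℝ) ≤ (N:ℝ) := by exact_mod_cast hN2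
  have hNR1 : (1:ℝ) ≤ (N:ℝ) := by linarith
  have hNRpos : (0:ℝ) < (N:ℝ) := by linarith
  set grid : Finset (ℕ × ℕ) := Finset.range (2 * N) ×ˢ Finset.range (2 * N) with hgrid
  -- trivial cases
  by_cases hg : IntegrableOn (gfun f x) UnitSq volume
  swap
  · have hT0 : ExtH f x = 0 := by rw [extH_eq]; exact integral_undef hg
    rw [hT0]
    calc ((‖(0:ℂ)‖₊ : ℝ≥0∞)) = 0 := by simp
    _ ≤ _ := zero_le
  by_cases hT : ExtH f x = 0
  · rw [hT]
    calc ((‖(0:ℂ)‖₊ : ℝ≥0∞)) = 0 := by simp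
    _ ≤ _ := zero_le
  have hTpos : 0 < ‖ExtH f x‖ := norm_pos_iff.2 hT
  -- basic identities
  set ee : ℕ × ℕ → ℂ := fun ij => ∫ ξ in cSq N ij, gfun f x ξ with hee
  have hsq_eq : ∀ ij ∈ grid, ExtH ((cSq N ij).indicator f) x = ee ij := by
    intro ij hij
    rw [hgrid, Finset.mem_product, Finset.mem_range, Finset.mem_range] at hij
    exact extH_indicator f x (measurableSet_Icc.prod measurableSet_Icc)
      (cSq_subset N hN1 hij.1 hij.2)
  have hT_sum : ExtH f x = ∑ ij ∈ grid, ee ij := by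
    rw [extH_eq, T_eq_squares N hN1 hg]
  have hrow_eqi : ∀ j ∈ Finset.range (2 * N),
      ExtH ((rowRect N j).indicator f) x = ∫ ξ in rowRect N j, gfun f x ξ := by
    intro j hj
    exact extH_indicator f x (measurableSet_Icc.prod measurableSet_Icc)
      (rowRect_subset N hN1 (Finset.mem_range.1 hj))
  have hrow_sum : ∀ j ∈ Finset.range (2 * N),
      ExtH ((rowRect N j).indicator f) x = ∑ i ∈ Finset.range (2 * N), ee (i, j) := by
    intro j hj
    rw [hrow_eqi j hj, row_eq_sq N hN1 hg (Finset.mem_range.1 hj)]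
  have hcol_eqi : ∀ i ∈ Finset.range (2 * N),
      ExtH ((colRect N i).indicator f) x = ∫ ξ in colRect N i, gfun f x ξ := by
    intro i hi
    exact extH_indicator f x (measurableSet_Icc.prod measurableSet_Icc)
      (colRect_subset N hN1 (Finset.mem_range.1 hi))
  have hcol_sum : ∀ i ∈ Finset.range (2 * N),
      ExtH ((colRect N i).indicator f) x = ∑ j ∈ Finset.range (2 * N), ee (i, j) := by
    intro i hi
    rw [hcol_eqi i hi, col_eq_sq N hN1 hg (Finset.mem_range.1 hi)]
  -- maxima
  have hgridne : grid.Nonempty := by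
    refine ⟨(0, 0), ?_⟩
    rw [hgrid, Finset.mem_product]
    constructor <;> · rw [Finset.mem_range]; omega
  have hrangene : (Finset.range (2 * N)).Nonempty := ⟨0, by rw [Finset.mem_range]; omega⟩
  obtain ⟨ij₀, hij₀, hsqmax⟩ := Finset.exists_max_image grid
    (fun ij => ‖ExtH ((cSq N ij).indicator f) x‖) hgridne
  obtain ⟨j₀, hj₀, hrmax⟩ := Finset.exists_max_image (Finset.range (2 * N))
    (fun j => ‖ExtH ((rowRect N j).indicator f) x‖) hrangene
  obtain ⟨i₀, hi₀, hcmax⟩ := Finset.exists_max_image (Finset.range (2 * N))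
    (fun i => ‖ExtH ((colRect N i).indicator f) x‖) hrangene
  set Msq := ‖ExtH ((cSq N ij₀).indicator f) x‖ with hMsqdef
  set Mr := ‖ExtH ((rowRect N j₀).indicator f) x‖ with hMrdef
  set Mc := ‖ExtH ((colRect N i₀).indicator f) x‖ with hMcdef
  have hMsq0 : 0 ≤ Msq := norm_nonneg _
  have hMr0 : 0 ≤ Mr := norm_nonneg _
  have hMc0 : 0 ≤ Mc := norm_nonneg _
  have hee_le_Msq : ∀ ij ∈ grid, ‖ee ij‖ ≤ Msq := by
    intro ij hij
    rw [← hsq_eq ij hij]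
    exact hsqmax ij hij
  have hSup_sq : ENNReal.ofReal Msq ≤
      ⨆ ij ∈ grid, (‖ExtH ((cSq N ij).indicator f) x‖₊ : ℝ≥0∞) := by
    rw [hMsqdef, ofReal_norm]
    exact le_iSup₂ (f := fun ij (_ : ij ∈ grid) =>
      (‖ExtH ((cSq N ij).indicator f) x‖₊ : ℝ≥0∞)) ij₀ hij₀
  have hSup_row : ENNReal.ofReal Mr ≤
      ⨆ j ∈ Finset.range (2 * N), (‖ExtH ((rowRect N j).indicator f) x‖₊ : ℝ≥0∞) := by
    rw [hMrdef, ofReal_norm]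
    exact le_iSup₂ (f := fun j (_ : j ∈ Finset.range (2 * N)) =>
      (‖ExtH ((rowRect N j).indicator f) x‖₊ : ℝ≥0∞)) j₀ hj₀
  have hSup_col : ENNReal.ofReal Mc ≤
      ⨆ j ∈ Finset.range (2 * N), (‖ExtH ((colRect N j).indicator f) x‖₊ : ℝ≥0∞) := by
    rw [hMcdef, ofReal_norm]
    exact le_iSup₂ (f := fun j (_ : j ∈ Finset.range (2 * N)) =>
      (‖ExtH ((colRect N j).indicator f) x‖₊ : ℝ≥0∞)) i₀ hi₀
  have hgridcard : (grid.card : ℝ) = 4 * (N:ℝ)^2 := by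
    rw [hgrid, Finset.card_product, Finset.card_range]
    push_cast
    ring
  by_cases hε25 : (2/5 : ℝ) ≤ ε
  · -- trivial case: the square term dominates
    have hpow : (N:ℝ)^(2:ℕ) ≤ (N:ℝ)^(5*ε) := by
      have h := Real.rpow_le_rpow_of_exponent_le hNR1 (show (2:ℝ) ≤ 5*ε by linarith)
      rwa [show ((2:ℝ)) = ((2:ℕ):ℝ) by norm_num, Real.rpow_natCast] at h
    have hreal : ‖ExtH f x‖ ≤ 4 * (N:ℝ)^2 * Msq := by
      rw [hT_sum]
      calc ‖∑ ij ∈ grid, ee ij‖ ≤ ∑ ij ∈ grid, ‖ee ij‖ := norm_sum_le _ _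
      _ ≤ grid.card • Msq := Finset.sum_le_card_nsmul _ _ _ hee_le_Msq
      _ = (grid.card : ℝ) * Msq := nsmul_eq_mul _ _
      _ = 4 * (N:ℝ)^2 * Msq := by rw [hgridcard]
    have hreal2 : ‖ExtH f x‖ ≤ 72 * ((N:ℝ)^(5*ε) * Msq) := by
      nlinarith [mul_le_mul_of_nonneg_right hpow hMsq0]
    calc ((‖ExtH f x‖₊ : ℝ≥0∞))
        = ENNReal.ofReal ‖ExtH f x‖ := (ofReal_norm _).symm
      _ ≤ ENNReal.ofReal (72 * ((N:ℝ)^(5*ε) * Msq)) := ENNReal.ofReal_le_ofReal hreal2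
      _ = ENNReal.ofReal 72 * (ENNReal.ofReal ((N:ℝ)^(5*ε)) * ENNReal.ofReal Msq) := by
          rw [ENNReal.ofReal_mul (by norm_num), ENNReal.ofReal_mul (by positivity)]
      _ ≤ ENNReal.ofReal 72 * (ENNReal.ofReal ((N:ℝ)^(5*ε)) *
            ⨆ ij ∈ grid, (‖ExtH ((cSq N ij).indicator f) x‖₊ : ℝ≥0∞)) := by
          gcongr
      _ ≤ _ := by
          gcongr
          exact le_trans (self_le_add_right _ _) (self_le_add_right _ _)
  -- main case : ε < 2/5
  push_neg at hε25
  set A := (N:ℝ) ^ ε with hA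
  have hApos : 0 < A := Real.rpow_pos_of_pos hNRpos ε
  have hA1 : 1 ≤ A := by
    have := Real.rpow_le_rpow_of_exponent_le hNR1 (le_of_lt hε)
    rwa [Real.rpow_zero] at this
  have hAN : A ≤ (N:ℝ) := by
    have := Real.rpow_le_rpow_of_exponent_le hNR1 (show ε ≤ 1 by linarith)
    rwa [Real.rpow_one] at this
  have h2eps : A ≤ (N:ℝ) ^ (2*ε) :=
    Real.rpow_le_rpow_of_exponent_le hNR1 (by linarith)
  have h5eps : A * A ≤ (N:ℝ) ^ (5*ε) := by
    rw [hA, ← Real.rpow_add hNRpos]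
    exact Real.rpow_le_rpow_of_exponent_le hNR1 (by linarith)
  set thr := ‖ExtH f x‖ / (16 * (N:ℝ)^3) with hthr
  have hthrpos : 0 < thr := div_pos hTpos (by positivity)
  have hthr_eq : 16 * (N:ℝ)^3 * thr = ‖ExtH f x‖ := by
    rw [hthr]
    field_simp
  set S := grid.filter (fun ij => thr ≤ ‖ee ij‖) with hS
  have hSgrid : S ⊆ grid := Finset.filter_subset _ _
  obtain ⟨𝒯, h𝒯S, h𝒯sep, h𝒯cov⟩ := exists_maximal_sep S
  by_cases hbr : A ≤ (𝒯.card : ℝ)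
  · -- broad case
    have hbroad : IsBroadFam N A 𝒯 := ⟨h𝒯S.trans hSgrid, hbr, h𝒯sep⟩
    have hBr : ENNReal.ofReal thr ≤ BrExt N A f x := by
      rw [BrExt]
      refine le_trans ?_ (le_iSup₂ (f := fun 𝒯' (_ : IsBroadFam N A 𝒯') =>
        ⨅ t ∈ 𝒯', (‖ExtH ((cSq N t).indicator f) x‖₊ : ℝ≥0∞)) 𝒯 hbroad)
      refine le_iInf₂ (fun t ht => ?_)
      have htS := h𝒯S ht
      have hthrle : thr ≤ ‖ee t‖ := (Finset.mem_filter.1 htS).2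
      calc ENNReal.ofReal thr ≤ ENNReal.ofReal ‖ExtH ((cSq N t).indicator f) x‖ := by
            refine ENNReal.ofReal_le_ofReal ?_
            rw [hsq_eq t (hSgrid htS)]
            exact hthrle
        _ = _ := ofReal_norm _
    calc ((‖ExtH f x‖₊ : ℝ≥0∞))
        = ENNReal.ofReal ‖ExtH f x‖ := (ofReal_norm _).symm
      _ ≤ ENNReal.ofReal (72 * ((N:ℝ)^3 * thr)) := by
          refine ENNReal.ofReal_le_ofReal ?_
          nlinarith [hthrpos.le]
      _ = ENNReal.ofReal 72 * (ENNReal.ofReal ((N:ℝ)^3) * ENNReal.ofReal thr) := by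
          rw [ENNReal.ofReal_mul (by norm_num), ENNReal.ofReal_mul (by positivity)]
      _ ≤ ENNReal.ofReal 72 * (ENNReal.ofReal ((N:ℝ)^3) * BrExt N A f x) := by gcongr
      _ ≤ _ := by
          gcongr
          exact self_le_add_left _ _
  -- narrow case
  push_neg at hbr
  set R := 𝒯.biUnion (fun t => ({t.2 - 1, t.2, t.2 + 1} : Finset ℕ)) with hR
  set C := 𝒯.biUnion (fun t => ({t.1 - 1, t.1, t.1 + 1} : Finset ℕ)) with hC
  have hcardR : (R.card : ℝ) ≤ 3 * A := by
    have h1 := card_triple_biUnion 𝒯 (fun t => t.2)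
    have h2 : (R.card : ℝ) ≤ 3 * (𝒯.card : ℝ) := by exact_mod_cast h1
    linarith
  have hcardC : (C.card : ℝ) ≤ 3 * A := by
    have h1 := card_triple_biUnion 𝒯 (fun t => t.1)
    have h2 : (C.card : ℝ) ≤ 3 * (𝒯.card : ℝ) := by exact_mod_cast h1
    linarith
  have hcov : ∀ τ ∈ S, τ.1 ∈ C ∨ τ.2 ∈ R := by
    intro τ hτ
    obtain ⟨t, ht, hcase⟩ := h𝒯cov τ hτ
    rcases hcase with h | h
    · exact Or.inl (Finset.mem_biUnion.2 ⟨t, ht, nat_close h⟩)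
    · exact Or.inr (Finset.mem_biUnion.2 ⟨t, ht, nat_close h⟩)
  set R' := R ∩ Finset.range (2 * N) with hR'
  set C' := C ∩ Finset.range (2 * N) with hC'
  have hcardR' : (R'.card : ℝ) ≤ 3 * A := by
    refine le_trans ?_ hcardR
    exact_mod_cast Finset.card_le_card (Finset.inter_subset_left)
  have hcardC' : (C'.card : ℝ) ≤ 3 * A := by
    refine le_trans ?_ hcardC
    exact_mod_cast Finset.card_le_card (Finset.inter_subset_left)
  set S1 := S.filter (fun τ => τ.2 ∈ R) with hS1
  set S2 := S.filter (fun τ => τ.2 ∉ R) with hS2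
  have hout : ∀ τ ∈ grid, τ ∉ S → ‖ee τ‖ ≤ thr := by
    intro τ hτg hτS
    by_contra hcon
    push_neg at hcon
    exact hτS (Finset.mem_filter.2 ⟨hτg, hcon.le⟩)
  -- row fibers
  have hrow_bound : ∀ j ∈ R', ‖∑ τ ∈ S1.filter (fun τ => τ.2 = j), ee τ‖
      ≤ Mr + 2 * (N:ℝ) * thr := by
    intro j hj
    have hjR : j ∈ R := (Finset.mem_inter.1 hj).1
    have hjrange : j ∈ Finset.range (2 * N) := (Finset.mem_inter.1 hj).2
    set rowF := grid.filter (fun τ => τ.2 = j) with hrowF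
    have hrowF_img : rowF = (Finset.range (2 * N)).image (fun i => (i, j)) := by
      ext ⟨p, q⟩
      simp only [hrowF, Finset.mem_filter, hgrid, Finset.mem_product, Finset.mem_image,
        Prod.mk.injEq]
      constructor
      · rintro ⟨⟨h1, _⟩, rfl⟩
        exact ⟨p, h1, rfl, rfl⟩
      · rintro ⟨i, hi, rfl, rfl⟩
        exact ⟨⟨hi, hjrange⟩, rfl⟩
    have hrowF_card : (rowF.card : ℝ) ≤ 2 * (N:ℝ) := by
      have : rowF.card ≤ 2 * N := by
        rw [hrowF_img]
        exact le_trans Finset.card_image_le (by simp)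
      exact_mod_cast this
    have hrowF_val : ‖∑ τ ∈ rowF, ee τ‖ ≤ Mr := by
      have hs : ∑ τ ∈ rowF, ee τ = ∑ i ∈ Finset.range (2 * N), ee (i, j) := by
        rw [hrowF_img, Finset.sum_image]
        intro a _ b _ h
        simpa using h
      rw [hs, ← hrow_sum j hjrange]
      exact hrmax j hjrange
    have hsub : S1.filter (fun τ => τ.2 = j) ⊆ rowF := by
      intro τ hτ
      rw [Finset.mem_filter] at hτ
      exact Finset.mem_filter.2 ⟨hSgrid (Finset.filter_subset _ _ hτ.1), hτ.2⟩
    have hdiff : ∀ τ ∈ rowF \ S1.filter (fun τ => τ.2 = j), ‖ee τ‖ ≤ thr := by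
      intro τ hτ
      rw [Finset.mem_sdiff] at hτ
      obtain ⟨hτrow, hτno⟩ := hτ
      have hτj : τ.2 = j := (Finset.mem_filter.1 hτrow).2
      refine hout τ (Finset.mem_filter.1 hτrow).1 (fun hτS => ?_)
      exact hτno (Finset.mem_filter.2 ⟨Finset.mem_filter.2 ⟨hτS, by rw [hτj]; exact hjR⟩, hτj⟩)
    have hdiffsum : ‖∑ τ ∈ rowF \ S1.filter (fun τ => τ.2 = j), ee τ‖ ≤ 2 * (N:ℝ) * thr := by
      refine le_trans (norm_sum_le _ _) ?_
      refine le_trans (Finset.sum_le_card_nsmul _ _ thr hdiff) ?_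
      rw [nsmul_eq_mul]
      have h1 : ((rowF \ S1.filter (fun τ => τ.2 = j)).card : ℝ) ≤ (rowF.card : ℝ) := by
        exact_mod_cast Finset.card_le_card (Finset.sdiff_subset)
      exact mul_le_mul_of_nonneg_right (h1.trans hrowF_card) hthrpos.le
    have heq : ∑ τ ∈ S1.filter (fun τ => τ.2 = j), ee τ =
        (∑ τ ∈ rowF, ee τ) - ∑ τ ∈ rowF \ S1.filter (fun τ => τ.2 = j), ee τ :=
      eq_sub_of_add_eq' (Finset.sum_sdiff hsub)
    rw [heq]
    exact le_trans (norm_sub_le _ _) (add_le_add hrowF_val hdiffsum)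
  have hmapsto1 : ∀ τ ∈ S1, τ.2 ∈ R' := by
    intro τ hτ
    rw [hS1, Finset.mem_filter] at hτ
    refine Finset.mem_inter.2 ⟨hτ.2, ?_⟩
    have := hSgrid hτ.1
    rw [hgrid, Finset.mem_product] at this
    exact this.2
  have hS1bound : ‖∑ τ ∈ S1, ee τ‖ ≤ 3 * A * (Mr + 2 * (N:ℝ) * thr) := by
    rw [← Finset.sum_fiberwise_of_maps_to hmapsto1 ee]
    refine le_trans (norm_sum_le _ _) ?_
    refine le_trans (Finset.sum_le_card_nsmul _ _ (Mr + 2 * (N:ℝ) * thr) hrow_bound) ?_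
    rw [nsmul_eq_mul]
    have hnn : 0 ≤ Mr + 2 * (N:ℝ) * thr := by positivity
    exact mul_le_mul_of_nonneg_right hcardR' hnn
  -- column fibers
  have hcol_bound : ∀ i ∈ C', ‖∑ τ ∈ S2.filter (fun τ => τ.1 = i), ee τ‖
      ≤ Mc + (3 * A * Msq + 2 * (N:ℝ) * thr) := by
    intro i hi
    have hirange : i ∈ Finset.range (2 * N) := (Finset.mem_inter.1 hi).2
    set colF := grid.filter (fun τ => τ.1 = i) with hcolF
    have hcolF_img : colF = (Finset.range (2 * N)).image (fun j => (i, j)) := by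
      ext ⟨p, q⟩
      simp only [hcolF, Finset.mem_filter, hgrid, Finset.mem_product, Finset.mem_image,
        Prod.mk.injEq]
      constructor
      · rintro ⟨⟨_, h2⟩, rfl⟩
        exact ⟨q, h2, rfl, rfl⟩
      · rintro ⟨jj, hjj, rfl, rfl⟩
        exact ⟨⟨hirange, hjj⟩, rfl⟩
    have hcolF_card : (colF.card : ℝ) ≤ 2 * (N:ℝ) := by
      have : colF.card ≤ 2 * N := by
        rw [hcolF_img]
        exact le_trans Finset.card_image_le (by simp)
      exact_mod_cast this
    have hcolF_val : ‖∑ τ ∈ colF, ee τ‖ ≤ Mc := by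
      have hs : ∑ τ ∈ colF, ee τ = ∑ j ∈ Finset.range (2 * N), ee (i, j) := by
        rw [hcolF_img, Finset.sum_image]
        intro a _ b _ h
        simpa using h
      rw [hs, ← hcol_sum i hirange]
      exact hcmax i hirange
    have hsub : S2.filter (fun τ => τ.1 = i) ⊆ colF := by
      intro τ hτ
      rw [Finset.mem_filter] at hτ
      exact Finset.mem_filter.2 ⟨hSgrid (Finset.filter_subset _ _ hτ.1), hτ.2⟩
    set D := colF \ S2.filter (fun τ => τ.1 = i) with hD
    have hDsub : D ⊆ colF := Finset.sdiff_subset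
    have hDsplit : ∑ τ ∈ D, ‖ee τ‖ =
        ∑ τ ∈ D.filter (fun τ => τ.2 ∈ R), ‖ee τ‖ +
        ∑ τ ∈ D.filter (fun τ => τ.2 ∉ R), ‖ee τ‖ :=
      (Finset.sum_filter_add_sum_filter_not D _ _).symm
    have hDgrid : ∀ τ ∈ D, τ ∈ grid := fun τ hτ => (Finset.mem_filter.1 (hDsub hτ)).1
    have hbound1 : ∑ τ ∈ D.filter (fun τ => τ.2 ∈ R), ‖ee τ‖ ≤ 3 * A * Msq := by
      have hcard : ((D.filter (fun τ => τ.2 ∈ R)).card : ℝ) ≤ 3 * A := by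
        refine le_trans ?_ hcardR'
        have : (D.filter (fun τ => τ.2 ∈ R)).card ≤ R'.card := by
          refine Finset.card_le_card_of_injOn (fun τ => τ.2) ?_ ?_
          · intro τ hτ
            rw [Finset.mem_coe, Finset.mem_filter] at hτ
            refine Finset.mem_inter.2 ⟨hτ.2, ?_⟩
            have := hDgrid τ hτ.1
            rw [hgrid, Finset.mem_product] at this
            exact this.2
          · intro τ hτ τ' hτ' hsnd
            have h1 : τ.1 = i := (Finset.mem_filter.1 (hDsub (Finset.filter_subset _ _ hτ))).2
            have h2 : τ'.1 = i := (Finset.mem_filter.1 (hDsub (Finset.filter_subset _ _ hτ'))).2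
            exact Prod.ext (h1.trans h2.symm) hsnd
        exact_mod_cast this
      refine le_trans (Finset.sum_le_card_nsmul _ _ Msq (fun τ hτ =>
        hee_le_Msq τ (hDgrid τ (Finset.filter_subset _ _ hτ)))) ?_
      rw [nsmul_eq_mul]
      exact mul_le_mul_of_nonneg_right hcard hMsq0
    have hbound2 : ∑ τ ∈ D.filter (fun τ => τ.2 ∉ R), ‖ee τ‖ ≤ 2 * (N:ℝ) * thr := by
      have hle : ∀ τ ∈ D.filter (fun τ => τ.2 ∉ R), ‖ee τ‖ ≤ thr := by
        intro τ hτ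
        rw [Finset.mem_filter] at hτ
        obtain ⟨hτD, hτR⟩ := hτ
        rw [hD, Finset.mem_sdiff] at hτD
        obtain ⟨hτcol, hτno⟩ := hτD
        have hτi : τ.1 = i := (Finset.mem_filter.1 hτcol).2
        refine hout τ (Finset.mem_filter.1 hτcol).1 (fun hτS => ?_)
        exact hτno (Finset.mem_filter.2 ⟨Finset.mem_filter.2 ⟨hτS, hτR⟩, hτi⟩)
      refine le_trans (Finset.sum_le_card_nsmul _ _ thr hle) ?_
      rw [nsmul_eq_mul]
      have h1 : ((D.filter (fun τ => τ.2 ∉ R)).card : ℝ) ≤ (colF.card : ℝ) := by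
        exact_mod_cast Finset.card_le_card
          ((Finset.filter_subset _ _).trans hDsub)
      exact mul_le_mul_of_nonneg_right (h1.trans hcolF_card) hthrpos.le
    have hdiffsum : ‖∑ τ ∈ D, ee τ‖ ≤ 3 * A * Msq + 2 * (N:ℝ) * thr := by
      refine le_trans (norm_sum_le _ _) ?_
      rw [hDsplit]
      exact add_le_add hbound1 hbound2
    have heq : ∑ τ ∈ S2.filter (fun τ => τ.1 = i), ee τ =
        (∑ τ ∈ colF, ee τ) - ∑ τ ∈ D, ee τ :=
      eq_sub_of_add_eq' (Finset.sum_sdiff hsub)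
    rw [heq]
    exact le_trans (norm_sub_le _ _) (add_le_add hcolF_val hdiffsum)
  have hmapsto2 : ∀ τ ∈ S2, τ.1 ∈ C' := by
    intro τ hτ
    rw [hS2, Finset.mem_filter] at hτ
    have hτC : τ.1 ∈ C := by
      rcases hcov τ hτ.1 with h | h
      · exact h
      · exact absurd h hτ.2
    refine Finset.mem_inter.2 ⟨hτC, ?_⟩
    have := hSgrid hτ.1
    rw [hgrid, Finset.mem_product] at this
    exact this.1
  have hS2bound : ‖∑ τ ∈ S2, ee τ‖ ≤
      3 * A * (Mc + (3 * A * Msq + 2 * (N:ℝ) * thr)) := by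
    rw [← Finset.sum_fiberwise_of_maps_to hmapsto2 ee]
    refine le_trans (norm_sum_le _ _) ?_
    refine le_trans (Finset.sum_le_card_nsmul _ _
      (Mc + (3 * A * Msq + 2 * (N:ℝ) * thr)) hcol_bound) ?_
    rw [nsmul_eq_mul]
    have hnn : 0 ≤ Mc + (3 * A * Msq + 2 * (N:ℝ) * thr) := by positivity
    exact mul_le_mul_of_nonneg_right hcardC' hnn
  -- the rest of the squares
  have hrest : ‖∑ τ ∈ grid \ S, ee τ‖ ≤ 4 * (N:ℝ)^2 * thr := by
    refine le_trans (norm_sum_le _ _) ?_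
    refine le_trans (Finset.sum_le_card_nsmul _ _ thr (fun τ hτ => ?_)) ?_
    · rw [Finset.mem_sdiff] at hτ
      exact hout τ hτ.1 hτ.2
    · rw [nsmul_eq_mul]
      have h1 : (((grid \ S).card) : ℝ) ≤ (grid.card : ℝ) := by
        exact_mod_cast Finset.card_le_card (Finset.sdiff_subset)
      rw [hgridcard] at h1
      exact mul_le_mul_of_nonneg_right h1 hthrpos.le
  have hsplitS : ∑ τ ∈ S, ee τ = ∑ τ ∈ S1, ee τ + ∑ τ ∈ S2, ee τ :=
    (Finset.sum_filter_add_sum_filter_not S _ _).symm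
  have hsplitG : ∑ τ ∈ grid, ee τ = ∑ τ ∈ grid \ S, ee τ + ∑ τ ∈ S, ee τ :=
    (Finset.sum_sdiff hSgrid).symm
  have htotal : ‖ExtH f x‖ ≤ 4 * (N:ℝ)^2 * thr +
      (3 * A * (Mr + 2 * (N:ℝ) * thr) +
       3 * A * (Mc + (3 * A * Msq + 2 * (N:ℝ) * thr))) := by
    rw [hT_sum, hsplitG, hsplitS]
    refine le_trans (norm_add_le _ _) (add_le_add hrest ?_)
    exact le_trans (norm_add_le _ _) (add_le_add hS1bound hS2bound)
  -- real arithmetic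
  have hmain : ‖ExtH f x‖ ≤ 6 * A * Mr + 6 * A * Mc + 18 * (A * A) * Msq :=
    arith_narrow _ _ _ _ _ _ _ hAN hNR2 hthrpos.le hthr_eq htotal
  have hfinal : ‖ExtH f x‖ ≤ 72 * ((N:ℝ)^(5*ε) * Msq) +
      72 * ((N:ℝ)^(2*ε) * max Mr Mc) :=
    arith_final _ _ _ _ _ _ _ hMr0 hMc0 hMsq0 hApos.le
      (Real.rpow_nonneg hNRpos.le _) h2eps h5eps hmain
  have hmaxRC : ENNReal.ofReal (max Mr Mc) ≤
      (⨆ j ∈ Finset.range (2 * N), (‖ExtH ((rowRect N j).indicator f) x‖₊ : ℝ≥0∞)) ⊔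
      (⨆ j ∈ Finset.range (2 * N), (‖ExtH ((colRect N j).indicator f) x‖₊ : ℝ≥0∞)) := by
    rcases max_choice Mr Mc with h | h
    · rw [h]
      exact le_trans hSup_row le_sup_left
    · rw [h]
      exact le_trans hSup_col le_sup_right
  calc ((‖ExtH f x‖₊ : ℝ≥0∞))
      = ENNReal.ofReal ‖ExtH f x‖ := (ofReal_norm _).symm
    _ ≤ ENNReal.ofReal (72 * ((N:ℝ)^(5*ε) * Msq) + 72 * ((N:ℝ)^(2*ε) * max Mr Mc)) :=
        ENNReal.ofReal_le_ofReal hfinal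
    _ = ENNReal.ofReal 72 * (ENNReal.ofReal ((N:ℝ)^(5*ε)) * ENNReal.ofReal Msq) +
        ENNReal.ofReal 72 * (ENNReal.ofReal ((N:ℝ)^(2*ε)) * ENNReal.ofReal (max Mr Mc)) := by
        rw [ENNReal.ofReal_add (by positivity) (by positivity),
          ENNReal.ofReal_mul (by norm_num), ENNReal.ofReal_mul (by positivity),
          ENNReal.ofReal_mul (by norm_num), ENNReal.ofReal_mul (by positivity)]
    _ ≤ ENNReal.ofReal 72 * (ENNReal.ofReal ((N:ℝ)^(5*ε)) *
          (⨆ ij ∈ grid, (‖ExtH ((cSq N ij).indicator f) x‖₊ : ℝ≥0∞))) +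
        ENNReal.ofReal 72 * (ENNReal.ofReal ((N:ℝ)^(2*ε)) *
          ((⨆ j ∈ Finset.range (2 * N), (‖ExtH ((rowRect N j).indicator f) x‖₊ : ℝ≥0∞)) ⊔
           (⨆ j ∈ Finset.range (2 * N), (‖ExtH ((colRect N j).indicator f) x‖₊ : ℝ≥0∞)))) := by
        gcongr
    _ = ENNReal.ofReal 72 * (ENNReal.ofReal ((N:ℝ)^(5*ε)) *
          (⨆ ij ∈ grid, (‖ExtH ((cSq N ij).indicator f) x‖₊ : ℝ≥0∞)) +
        ENNReal.ofReal ((N:ℝ)^(2*ε)) *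
          ((⨆ j ∈ Finset.range (2 * N), (‖ExtH ((rowRect N j).indicator f) x‖₊ : ℝ≥0∞)) ⊔
           (⨆ j ∈ Finset.range (2 * N), (‖ExtH ((colRect N j).indicator f) x‖₊ : ℝ≥0∞)))) :=
        (mul_add _ _ _).symm
    _ ≤ _ := mul_le_mul_right le_self_add _
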